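/- Let F be a finite field of characteristic p. The set G_O := { AffMap(α, β) : α, β ∈ F⟦X⟧, α with nonzero constant term } is a subgroup of Aut(T_F) and is coarsely diagonal: for every g ∈ G_O and every word u ∈ List F, the element (g_u)⁻¹ * g has finite order (in fact, order dividing p). -/

import Mathlib

namespace RoverNekrashevych

/-- The state (section) of `f` at the word `u`. -/
def state {X : Type*} (f : List X → List X) (u : List X) : List X → List X :=
  fun w => (f (u ++ w)).drop u.length

/-- A function on words is finite-state if it has only finitely many states. -/
def FiniteStateFun {X : Type*} (f : List X → List X) : Prop :=
  Set.Finite {g : List X → List X | ∃ u : List X, g = state f u}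

/-- The truncated power series `Σ_{i < length w} w_i X^i` determined by a word. -/
noncomputable def wordToSeries {F : Type*} [CommSemiring F] (w : List F) : PowerSeries F :=
  PowerSeries.mk fun i => w.getD i 0

/-- The affine map `AffMap (α, β)` on words: it sends `(c_0, …, c_{e-1})` to the word of
the first `e` coefficients of `α · (Σ_{i<e} c_i X^i) + β`. -/
noncomputable def affWord {F : Type*} [CommSemiring F] (α β : PowerSeries F) (w : List F) :
    List F :=
  List.ofFn fun i : Fin w.length => PowerSeries.coeff i (α * wordToSeries w + β)

/-- `f` is an automorphism of the infinite rooted tree with vertex set `List X`. -/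
def IsTreeAut {X : Type*} (f : Equiv.Perm (List X)) : Prop :=
  f [] = [] ∧ ∀ (u : List X) (x : X), ∃ y : X, f (u ++ [x]) = f u ++ [y]

/-- `G` consists of tree automorphisms. -/
def IsTreeAutGroup {X : Type*} (G : Subgroup (Equiv.Perm (List X))) : Prop :=
  ∀ f ∈ G, IsTreeAut f

/-- `G` is coarsely diagonal: for `g ∈ G`, each state `g_u` is realized by some `g' ∈ G`,
and `g'⁻¹ * g` has finite order. -/
def CoarselyDiagonal {X : Type*} (G : Subgroup (Equiv.Perm (List X))) : Prop :=
  ∀ g ∈ G, ∀ u : List X, ∃ g' ∈ G, ⇑g' = state (⇑g) u ∧ IsOfFinOrder (g'⁻¹ * g)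

/-- The set `G_O` of all affine tree automorphisms `AffMap (α, β)` with
`α, β ∈ O = F⟦X⟧` and `α` a unit of `O`. -/
def AffSet (F : Type*) [Field F] : Set (Equiv.Perm (List F)) :=
  {g | ∃ α β : PowerSeries F, PowerSeries.constantCoeff α ≠ 0 ∧ ⇑g = affWord α β}


section Aux
open PowerSeries
variable {F : Type*} [Field F]

private lemma coeff_wordToSeries (w : List F) (i : ℕ) :
    coeff i (wordToSeries w) = w.getD i 0 := coeff_mk _ _

@[simp] private lemma length_affWord (α β : PowerSeries F) (w : List F) :
    (affWord α β w).length = w.length := by simp [affWord]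

private lemma getElem_affWord (α β : PowerSeries F) (w : List F) (i : ℕ)
    (h : i < (affWord α β w).length) :
    (affWord α β w)[i] = coeff i (α * wordToSeries w + β) := by
  simp [affWord]

private lemma coeff_aff_congr {α β S T : PowerSeries F} {e i : ℕ} (hi : i < e)
    (h : ∀ j < e, coeff j S = coeff j T) :
    coeff i (α * S + β) = coeff i (α * T + β) := by
  simp only [map_add]
  congr 1
  rw [coeff_mul, coeff_mul]
  refine Finset.sum_congr rfl fun q hq => ?_
  rw [Finset.HasAntidiagonal.mem_antidiagonal] at hq
  rw [h q.2 (by omega)]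

private lemma coeff_wordToSeries_affWord (α β : PowerSeries F) (w : List F) {i : ℕ}
    (hi : i < w.length) :
    coeff i (wordToSeries (affWord α β w)) = coeff i (α * wordToSeries w + β) := by
  rw [coeff_wordToSeries, List.getD_eq_getElem _ _ (by simpa using hi), getElem_affWord]

private lemma affWord_comp (α β α' β' : PowerSeries F) (w : List F) :
    affWord α β (affWord α' β' w) = affWord (α * α') (α * β' + β) w := by
  apply List.ext_getElem (by simp)
  intro i h1 h2
  rw [getElem_affWord, getElem_affWord]
  have hi : i < w.length := by simpa using h2
  rw [coeff_aff_congr hi (fun j hj => coeff_wordToSeries_affWord α' β' w hj)]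
  congr 1
  ring

private lemma affWord_one_zero (w : List F) : affWord 1 0 w = w := by
  apply List.ext_getElem (by simp)
  intro i h1 h2
  rw [getElem_affWord]
  simp [coeff_wordToSeries, List.getD_eq_getElem _ _ h2, List.getD,
    List.getElem?_eq_getElem h2]

private lemma affWord_nil (α β : PowerSeries F) : affWord α β [] = [] := by
  simp [affWord]

/-- The permutation of words induced by an affine map with invertible linear part. -/
noncomputable def affPerm (α β ι : PowerSeries F) (h1 : ι * α = 1) (h2 : α * ι = 1) :
    Equiv.Perm (List F) where
  toFun := affWord α β
  invFun := affWord ι (-(ι * β))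
  left_inv w := by
    rw [affWord_comp, h1]
    rw [show ι * β + -(ι * β) = 0 by ring]
    exact affWord_one_zero w
  right_inv w := by
    rw [affWord_comp, h2]
    rw [show α * -(ι * β) + β = 0 by rw [show α * -(ι * β) = -(α * ι * β) by ring, h2]; ring]
    exact affWord_one_zero w

private lemma wordToSeries_append (u w : List F) :
    wordToSeries (u ++ w) = wordToSeries u + X ^ u.length * wordToSeries w := by
  ext i
  rw [map_add, coeff_X_pow_mul', coeff_wordToSeries, coeff_wordToSeries, coeff_wordToSeries]
  by_cases h : i < u.length
  · rw [if_neg (by omega), List.getD_append _ _ _ _ h, add_zero]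
  · rw [if_pos (by omega), List.getD_append_right _ _ _ _ (by omega),
      List.getD_eq_default u _ (by omega), zero_add]

/-- The translation part of the state of `affWord α β` at `u`. -/
noncomputable def shiftA (α β : PowerSeries F) (u : List F) : PowerSeries F :=
  PowerSeries.mk fun j => coeff (u.length + j) (α * wordToSeries u + β)

private lemma state_affWord (α β : PowerSeries F) (u w : List F) :
    (affWord α β (u ++ w)).drop u.length = affWord α (shiftA α β u) w := by
  apply List.ext_getElem (by simp)
  intro i h1 h2
  rw [List.getElem_drop, getElem_affWord, getElem_affWord]
  rw [wordToSeries_append, mul_add, show α * (X ^ u.length * wordToSeries w)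
    = X ^ u.length * (α * wordToSeries w) by ring]
  rw [show α * wordToSeries u + X ^ u.length * (α * wordToSeries w) + β
    = (α * wordToSeries u + β) + X ^ u.length * (α * wordToSeries w) by ring]
  rw [map_add, map_add, show u.length + i = i + u.length by ring, coeff_X_pow_mul]
  rw [show i + u.length = u.length + i by ring]
  rw [show (coeff i) (α * wordToSeries w + shiftA α β u)
    = coeff i (α * wordToSeries w) + coeff (u.length + i) (α * wordToSeries u + β) by
      rw [map_add]; congr 1; exact coeff_mk _ _]
  simp only [map_add]; ring

private lemma translate_pow (γ : PowerSeries F) (n : ℕ) (w : List F) :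
    (affWord 1 γ)^[n] w = affWord 1 (n • γ) w := by
  induction n with
  | zero => simp [affWord_one_zero]
  | succ n ih =>
    rw [Function.iterate_succ_apply', ih, affWord_comp]
    congr 1
    · ring
    · rw [succ_nsmul]; ring

private lemma unit_data {α : PowerSeries F} (hα : PowerSeries.constantCoeff α ≠ 0) :
    ∃ ι : PowerSeries F, ι * α = 1 ∧ α * ι = 1 := by
  obtain ⟨v, hv⟩ := PowerSeries.isUnit_iff_constantCoeff.2 (isUnit_iff_ne_zero.2 hα)
  exact ⟨↑v⁻¹, by rw [← hv]; exact v.inv_mul, by rw [← hv]; exact v.mul_inv⟩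

/-- The subgroup of affine tree automorphisms. -/
noncomputable def affSubgroup (F : Type*) [Field F] : Subgroup (Equiv.Perm (List F)) where
  carrier := AffSet F
  one_mem' := ⟨1, 0, by simp, funext fun w => (affWord_one_zero w).symm⟩
  mul_mem' := by
    rintro g g' ⟨α, β, hα, hg⟩ ⟨α', β', hα', hg'⟩
    refine ⟨α * α', α * β' + β, by simp [hα, hα'], funext fun w => ?_⟩
    show g (g' w) = _
    rw [hg', hg, affWord_comp]
  inv_mem' := by
    rintro g ⟨α, β, hα, hg⟩
    obtain ⟨ι, h1, h2⟩ := unit_data hα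
    have hgeq : g = affPerm α β ι h1 h2 := Equiv.coe_fn_injective hg
    refine ⟨ι, -(ι * β), fun h0 => ?_, by rw [hgeq]; rfl⟩
    have := congrArg (PowerSeries.constantCoeff) h1
    rw [map_mul, map_one, h0, zero_mul] at this
    exact one_ne_zero this.symm

end Aux

/-- Let `F` be a finite field of characteristic `p`.  The set
`G_O = { AffMap (α, β) : α, β ∈ F⟦X⟧, α(0) ≠ 0 }` is a subgroup of `Aut(T_F)` and is
coarsely diagonal; in fact for every `g ∈ G_O` and every word `u`, the element
`(g_u)⁻¹ * g` has order dividing `p`. -/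
theorem affGroup_coarselyDiagonal {F : Type*} [Field F] [Fintype F]
    (p : ℕ) (hp : p.Prime) [CharP F p] :
    (∃ G : Subgroup (Equiv.Perm (List F)), (G : Set (Equiv.Perm (List F))) = AffSet F) ∧
    ∀ G : Subgroup (Equiv.Perm (List F)), (G : Set (Equiv.Perm (List F))) = AffSet F →
      IsTreeAutGroup G ∧ CoarselyDiagonal G ∧
      ∀ g ∈ G, ∀ u : List F, ∃ g' ∈ G, ⇑g' = state (⇑g) u ∧ (g'⁻¹ * g) ^ p = 1 := by
  refine ⟨⟨affSubgroup F, rfl⟩, fun G hG => ?_⟩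
  have hGm : ∀ g, g ∈ G ↔ g ∈ AffSet F := fun g => by
    rw [← SetLike.mem_coe, hG]
  have key : ∀ g ∈ G, ∀ u : List F, ∃ g' ∈ G, ⇑g' = state (⇑g) u ∧
      (g'⁻¹ * g) ^ p = 1 := by
    intro g hg u
    obtain ⟨α, β, hα, hgc⟩ := (hGm g).1 hg
    obtain ⟨ι, h1, h2⟩ := unit_data hα
    set β' := shiftA α β u with hβ'
    set g' := affPerm α β' ι h1 h2 with hg'
    have hg'c : ⇑g' = affWord α β' := rfl
    have hg'mem : g' ∈ G := (hGm g').2 ⟨α, β', hα, rfl⟩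
    refine ⟨g', hg'mem, ?_, ?_⟩
    · funext w
      show g' w = ((g (u ++ w)).drop u.length)
      rw [hg'c, hgc]
      exact (state_affWord α β u w).symm
    · have hinv : ⇑g'⁻¹ = affWord ι (-(ι * β')) := rfl
      have hcoe : ⇑(g'⁻¹ * g) = affWord 1 (ι * (β - β')) := by
        funext w
        show g'⁻¹ (g w) = _
        rw [hgc, hinv, affWord_comp, h1]
        congr 1
        ring
      apply Equiv.ext
      intro w
      rw [← Equiv.Perm.iterate_eq_pow]
      rw [show (⇑(g'⁻¹ * g))^[p] w = (affWord 1 (ι * (β - β')))^[p] w by rw [hcoe]]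
      rw [translate_pow]
      rw [show p • (ι * (β - β')) = (0 : PowerSeries F) by
        ext i
        rw [map_nsmul, nsmul_eq_mul, map_zero, CharP.cast_eq_zero F p, zero_mul]]
      exact affWord_one_zero w
  refine ⟨?_, ?_, key⟩
  · intro f hf
    obtain ⟨α, β, hα, hfc⟩ := (hGm f).1 hf
    constructor
    · rw [show f [] = affWord α β [] from congrFun hfc [], affWord_nil]
    · intro u x
      refine ⟨PowerSeries.coeff u.length (α * wordToSeries (u ++ [x]) + β), ?_⟩
      rw [show f (u ++ [x]) = affWord α β (u ++ [x]) from congrFun hfc _,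
          show f u = affWord α β u from congrFun hfc _]
      apply List.ext_getElem (by simp)
      intro i hi1 hi2
      rw [getElem_affWord]
      have hsame : ∀ j < u.length, PowerSeries.coeff j (wordToSeries (u ++ [x]))
          = PowerSeries.coeff j (wordToSeries u) := by
        intro j hj
        rw [coeff_wordToSeries, coeff_wordToSeries, List.getD_append _ _ _ _ hj]
      by_cases hcase : i < u.length
      · rw [List.getElem_append_left (by simpa using hcase), getElem_affWord,
          coeff_aff_congr hcase hsame]
      · have hieq : i = u.length := by
          simp only [List.length_append, List.length_singleton] at hi2
          have := hi2; simp at this; omega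
        rw [List.getElem_append_right (by simp; omega)]
        simp [hieq]
  · intro g hg u
    obtain ⟨g', hg'mem, hst, hpow⟩ := key g hg u
    exact ⟨g', hg'mem, hst, isOfFinOrder_iff_pow_eq_one.2 ⟨p, hp.pos, hpow⟩⟩


end RoverNekrashevych
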